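/- Let Θ be a finite nonempty set and l, u : Θ → ℝ with 0 ≤ l(x) ≤ u(x) for all x and ∑_{x∈Θ} l(x) < 1. If there exists x ∈ Θ with l(x) = u(x) > 0, then Sudano's transform PraPl[(l,u)](x) = l(x) + ((1 − ∑_{y∈Θ} l(y)) / ∑_{y∈Θ} u(y))·u(x) satisfies PraPl[(l,u)](x) > u(x); in particular PraPl[(l,u)] falls outside the interval probability system P(l,u) = {p : l(y) ≤ p(y) ≤ u(y) ∀y}. -/
import Mathlib


open Finset

/-- Sudano's transform `PraPl[(l,u)](x) = l(x) + ((1 - ∑ l) / ∑ u)⬝u(x)`. -/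
noncomputable def praPl {Θ : Type*} [Fintype Θ] (l u : Θ → ℝ) (x : Θ) : ℝ :=
  l x + ((1 - ∑ y : Θ, l y) / (∑ y : Θ, u y)) * u x

/-- if `l(x) = u(x) > 0` for some `x` and `∑ l < 1`, then
`PraPl[(l,u)](x) > u(x)`, so `PraPl[(l,u)]` falls outside the interval system
`P(l,u) = {p : l ≤ p ≤ u}`. -/
theorem praPl_outside_interval
    {Θ : Type*} [Fintype Θ] [Nonempty Θ] (l u : Θ → ℝ)
    (hl : ∀ x, 0 ≤ l x) (hlu : ∀ x, l x ≤ u x)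
    (hlsum : ∑ x : Θ, l x < 1)
    (x : Θ) (hx : l x = u x) (hxpos : 0 < u x) :
    praPl l u x > u x ∧
    ¬ (∀ y, l y ≤ praPl l u y ∧ praPl l u y ≤ u y) := by
  have hsumu : 0 < ∑ y : Θ, u y :=
    Finset.sum_pos' (fun y _ => le_trans (hl y) (hlu y)) ⟨x, Finset.mem_univ x, hxpos⟩
  have hpos : 0 < ((1 - ∑ y : Θ, l y) / (∑ y : Θ, u y)) * u x := by
    apply mul_pos (div_pos (by linarith) hsumu) hxpos
  have hgt : praPl l u x > u x := by
    unfold praPl; rw [hx]; linarith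
  exact ⟨hgt, fun h => absurd (h x).2 (not_le.mpr hgt)⟩
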